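/- arXiv:1508.01663 — 4 statements merged into one kernel-verified Lean document; each statement's English description precedes it below -/
import Mathlib

section
/- For integers x_0, ..., x_{d-1} ≥ 0, the d×d determinant det[1/(x_i + j)!]_{0 ≤ i,j ≤ d-1} equals (∏_{0 ≤ i < j ≤ d-1} (x_i - x_j)) / (∏_{0 ≤ i ≤ d-1} (x_i + d - 1)!), where by convention 1/m! = 0 for m < 0. -/
/-- `1/m!` for an integer `m`, with the convention `1/m! = 0` for `m < 0`. -/
noncomputable def invFact (m : ℤ) : ℚ := if 0 ≤ m then ((Nat.factorial m.toNat : ℕ) : ℚ)⁻¹ else 0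

lemma invFact_natCast (n : ℕ) : invFact (n : ℤ) = ((n.factorial : ℕ) : ℚ)⁻¹ := by
  simp [invFact]

/-- `(a + d - 1)! = (a + j)! * ∏_{k=j+1}^{d-1} (a + k)` for `j < d`. -/
lemma fact_split (a j d : ℕ) (h : j < d) :
    (a + d - 1).factorial = (a + j).factorial * ∏ k ∈ Finset.Ico (j + 1) d, (a + k) := by
  induction d with
  | zero => omega
  | succ d ih =>
    rcases Nat.lt_or_ge j d with hd | hd
    · have h1 : j + 1 ≤ d := hd
      rw [Finset.prod_Ico_succ_top h1, ← mul_assoc, ← ih hd]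
      have h2 : a + (d + 1) - 1 = (a + d - 1) + 1 := by omega
      have h3 : a + d - 1 + 1 = a + d := by omega
      rw [h2, Nat.factorial_succ, h3, mul_comm]
    · have : j = d := by omega
      subst this
      simp [Nat.add_sub_cancel]

/-- pair-filter product equals iterated `Ioi` product -/
lemma prod_pairs_eq {d : ℕ} (f : Fin d → Fin d → ℚ) :
    ∏ p ∈ Finset.univ.filter (fun p : Fin d × Fin d => p.1 < p.2), f p.1 p.2 =
      ∏ i : Fin d, ∏ j ∈ Finset.Ioi i, f i j := by
  rw [Finset.prod_sigma']
  exact Finset.prod_nbij' (fun p => ⟨p.1, p.2⟩) (fun p => (p.1, p.2))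
    (fun p hp => by
      simp only [Finset.mem_filter] at hp
      simp [Finset.mem_Ioi, hp.2])
    (fun p hp => by
      simp only [Finset.mem_sigma, Finset.mem_Ioi] at hp
      simp [hp.2])
    (fun p _ => rfl) (fun p _ => rfl) (fun p _ => rfl)

/-- **Lemma (Fulton, Example A.9.3).**  For nonnegative integers `x_0, …, x_{d-1}`,
`det[1/(x_i + j)!]_{0 ≤ i,j ≤ d-1} = ∏_{i<j}(x_i - x_j) / ∏_i (x_i + d - 1)!`. -/
theorem det_inv_factorial_eq_vandermonde_div (d : ℕ) (x : Fin d → ℕ) :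
    Matrix.det (Matrix.of fun i j : Fin d => invFact ((x i : ℤ) + (j : ℕ))) =
      (∏ p ∈ Finset.univ.filter (fun p : Fin d × Fin d => p.1 < p.2),
          ((x p.1 : ℚ) - (x p.2 : ℚ))) /
        ∏ i : Fin d, ((Nat.factorial (x i + d - 1) : ℕ) : ℚ) := by
  classical
  -- the polynomial in column j
  set q : Fin d → Polynomial ℚ :=
    fun j => ∏ k ∈ Finset.Ico ((j : ℕ) + 1) d, (Polynomial.X + Polynomial.C (k : ℚ)) with hq
  have hq_monic : ∀ j, (q j).Monic := fun j =>
    Polynomial.monic_prod_of_monic _ _ (fun k _ => Polynomial.monic_X_add_C _)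
  have hq_deg : ∀ j : Fin d, (q j).natDegree = d - 1 - (j : ℕ) := by
    intro j
    simp only [hq]
    rw [Polynomial.natDegree_prod _ _
      (fun (k : ℕ) _ => (Polynomial.monic_X_add_C ((k : ℕ) : ℚ)).ne_zero)]
    simp only [Polynomial.natDegree_X_add_C]
    rw [Finset.sum_const, Nat.card_Ico, smul_eq_mul, mul_one]
    omega
  have hq_eval : ∀ (j : Fin d) (t : ℚ),
      (q j).eval t = ∏ k ∈ Finset.Ico ((j : ℕ) + 1) d, (t + (k : ℚ)) := by
    intro j t
    simp only [hq, Polynomial.eval_prod]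
    simp
  -- entrywise factorization
  have hentry : ∀ i j : Fin d,
      invFact ((x i : ℤ) + (j : ℕ)) =
        ((Nat.factorial (x i + d - 1) : ℕ) : ℚ)⁻¹ * (q j).eval ((x i : ℕ) : ℚ) := by
    intro i j
    have hjd : (j : ℕ) < d := j.isLt
    have hcast : ((x i : ℤ) + ((j : ℕ) : ℤ)) = (((x i + (j : ℕ)) : ℕ) : ℤ) := by push_cast; ring
    rw [hcast, invFact_natCast]
    have hfact := fact_split (x i) (j : ℕ) d hjd
    have hfactQ : ((x i + d - 1).factorial : ℚ) =
        ((x i + (j : ℕ)).factorial : ℚ) *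
          ∏ k ∈ Finset.Ico ((j : ℕ) + 1) d, ((x i : ℚ) + (k : ℚ)) := by
      rw [hfact]; push_cast; ring
    have hprod_ne : (∏ k ∈ Finset.Ico ((j : ℕ) + 1) d, ((x i : ℚ) + (k : ℚ))) ≠ 0 := by
      apply Finset.prod_ne_zero_iff.mpr
      intro k hk
      have hk1 : 1 ≤ k := by
        simp only [Finset.mem_Ico] at hk; omega
      have hk1' : (1 : ℚ) ≤ (k : ℚ) := by exact_mod_cast hk1
      have : (0:ℚ) < (x i : ℚ) + (k : ℚ) := by positivity
      exact ne_of_gt this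
    have hfne : ((x i + (j : ℕ)).factorial : ℚ) ≠ 0 := by
      exact_mod_cast (Nat.factorial_pos _).ne'
    rw [hq_eval]
    rw [hfactQ, mul_inv, mul_assoc, inv_mul_cancel₀ hprod_ne, mul_one]
  -- the key determinant computation
  have key : (Matrix.det fun i j : Fin d => (q j).eval ((x i : ℕ) : ℚ)) =
      ∏ p ∈ Finset.univ.filter (fun p : Fin d × Fin d => p.1 < p.2),
        ((x p.1 : ℚ) - (x p.2 : ℚ)) := by
    have hsub : (Matrix.det fun i j : Fin d => (q j).eval ((x i : ℕ) : ℚ)) =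
        ((Matrix.of fun i j : Fin d =>
            (q (Fin.rev j)).eval ((x (Fin.rev i) : ℕ) : ℚ))).det := by
      have := Matrix.det_submatrix_equiv_self (Fin.revPerm (n := d))
        (Matrix.of fun i j : Fin d => (q j).eval ((x i : ℕ) : ℚ))
      exact this.symm
    rw [hsub]
    have hp_deg : ∀ j : Fin d, (q (Fin.rev j)).natDegree = (j : ℕ) := by
      intro j
      rw [hq_deg]
      have := j.isLt
      rw [Fin.val_rev]
      omega
    rw [← Matrix.det_eval_matrixOfPolynomials_eq_det_vandermonde
      (fun i : Fin d => ((x (Fin.rev i) : ℕ) : ℚ)) (fun j => q (Fin.rev j))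
      hp_deg (fun j => hq_monic _)]
    rw [Matrix.det_vandermonde]
    rw [← prod_pairs_eq (fun i j => ((x (Fin.rev j) : ℕ) : ℚ) - ((x (Fin.rev i) : ℕ) : ℚ))]
    exact Finset.prod_nbij' (fun p => (Fin.rev p.2, Fin.rev p.1))
      (fun p => (Fin.rev p.2, Fin.rev p.1))
      (fun p hp => by
        simp only [Finset.mem_filter, Finset.mem_univ, true_and] at hp ⊢
        exact Fin.rev_lt_rev.mpr hp)
      (fun p hp => by
        simp only [Finset.mem_filter, Finset.mem_univ, true_and] at hp ⊢
        exact Fin.rev_lt_rev.mpr hp)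
      (fun p _ => by simp [Fin.rev_rev])
      (fun p _ => by simp [Fin.rev_rev])
      (fun p _ => by simp [Fin.rev_rev])
  -- assemble
  have hM : (Matrix.of fun i j : Fin d => invFact ((x i : ℤ) + (j : ℕ))) =
      Matrix.of (fun i j : Fin d =>
        ((Nat.factorial (x i + d - 1) : ℕ) : ℚ)⁻¹ * (q j).eval ((x i : ℕ) : ℚ)) := by
    ext i j; exact hentry i j
  rw [hM, Matrix.det_mul_column (fun i => ((Nat.factorial (x i + d - 1) : ℕ) : ℚ)⁻¹)
    (fun i j : Fin d => (q j).eval ((x i : ℕ) : ℚ)), key,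
    div_eq_mul_inv, ← Finset.prod_inv_distrib, mul_comm]
end

section
/- Let Φ be the linear form on the Laurent polynomial ring A[t_0^{±1}, ..., t_{d-1}^{±1}] over a ℚ-algebra A defined by Φ(f) = const_t(Δ(t) · exp(∑_i 1/t_i) · f(t)), where const_t denotes the constant coefficient and Δ(t) = ∏_{i<j}(t_i - t_j). Then for any nonnegative integers k_0, ..., k_{d-1}, Φ(∏_i t_i^{k_i}) = (-1)^{d(d-1)/2} · (∏_{i<j}(k_i - k_j)) / (∏_i (k_i + d - 1)!). -/
open Finset

/-- The constant term of `Δ(t) · exp(∑_i 1/t_i) · ∏_i t_i^{m_i}`, where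
`Δ(t) = ∏_{i<j}(t_i - t_j) = ∑_σ sgn(σ) ∏_i t_i^{d-1-σ(i)}`:  expanding the exponential
series, the constant term equals `∑_σ sgn(σ) ∏_i 1/(m_i + d - 1 - σ(i))!`. -/
noncomputable def phiC (d : ℕ) (m : Fin d → ℤ) : ℚ :=
  ∑ σ : Equiv.Perm (Fin d),
    ((Equiv.Perm.sign σ : ℤ) : ℚ) * ∏ i : Fin d, invFact (m i + (d : ℤ) - 1 - ((σ i : ℕ) : ℤ))

/-- The linear form `Φ` on the Laurent polynomial ring `A[t_0^{±1}, …, t_{d-1}^{±1}]`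
(realized as `AddMonoidAlgebra A (Fin d → ℤ)`), given by
`Φ(f) = const_t(Δ(t) · exp(∑_i 1/t_i) · f(t))`; by linearity it is determined by its
values `phiC d m` on the monomials `t^m`. -/
noncomputable def Phi (A : Type*) [CommRing A] [Algebra ℚ A] (d : ℕ)
    (f : AddMonoidAlgebra A (Fin d → ℤ)) : A :=
  f.coeff.sum fun m a => phiC d m • a

/-- The action of a permutation `σ` on Laurent polynomials, with `σ(t_i) = t_{σ(i)}`. -/
noncomputable def permL {A : Type*} [CommRing A] {d : ℕ} (σ : Equiv.Perm (Fin d))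
    (f : AddMonoidAlgebra A (Fin d → ℤ)) : AddMonoidAlgebra A (Fin d → ℤ) :=
  AddMonoidAlgebra.ofCoeff (Finsupp.mapDomain (fun m : Fin d → ℤ => m ∘ σ.symm) f.coeff)

lemma prod_pairs {d : ℕ} {M : Type*} [CommMonoid M] (f : Fin d → Fin d → M) :
    ∏ p ∈ Finset.univ.filter (fun p : Fin d × Fin d => p.1 < p.2), f p.1 p.2
      = ∏ i : Fin d, ∏ j ∈ Ioi i, f i j := by
  rw [Finset.prod_sigma']
  refine Finset.prod_nbij' (fun p => ⟨p.1, p.2⟩) (fun x => (x.1, x.2)) ?_ ?_ ?_ ?_ ?_ <;>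
    simp [Finset.mem_sigma, Finset.mem_filter]

lemma sum_card_Ioi (d : ℕ) : ∑ i : Fin d, (Ioi i).card = d * (d - 1) / 2 := by
  simp only [Fin.card_Ioi]
  rw [Fin.sum_univ_eq_sum_range (fun i => d - 1 - i), ← Finset.sum_range_reflect,
    ← Finset.sum_range_id d]
  refine Finset.sum_congr rfl fun i hi => ?_
  simp only [Finset.mem_range] at hi
  omega

lemma phiC_mul_fact (d : ℕ) (k : Fin d → ℕ) :
    phiC d (fun i => (k i : ℤ)) * ∏ i : Fin d, ((Nat.factorial (k i + d - 1) : ℕ) : ℚ)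
      = ∏ i : Fin d, ∏ j ∈ Ioi i, ((k j : ℚ) - (k i : ℚ)) := by
  have key : ∀ (σ : Equiv.Perm (Fin d)) (i : Fin d),
      invFact ((k i : ℤ) + (d : ℤ) - 1 - ((σ i : ℕ) : ℤ)) * ((Nat.factorial (k i + d - 1) : ℕ) : ℚ)
        = (((k i + d - 1).descFactorial (σ i) : ℕ) : ℚ) := by
    intro σ i
    have hd : 1 ≤ d := i.pos
    have hs : (σ i : ℕ) ≤ k i + d - 1 := by have := (σ i).isLt; omega
    have harg : (k i : ℤ) + (d : ℤ) - 1 - ((σ i : ℕ) : ℤ) = ((k i + d - 1 - (σ i : ℕ) : ℕ) : ℤ) := by push_cast [Nat.cast_sub hs]; omega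
    rw [harg, invFact, if_pos (Int.ofNat_nonneg _), Int.toNat_natCast]
    have hfac := Nat.factorial_mul_descFactorial hs
    have hne : ((Nat.factorial (k i + d - 1 - (σ i : ℕ)) : ℕ) : ℚ) ≠ 0 := by
      exact_mod_cast (Nat.factorial_pos _).ne'
    field_simp
    rw [← hfac]
    push_cast
    ring
  rw [phiC, Finset.sum_mul]
  have step1 : ∀ σ : Equiv.Perm (Fin d),
      (((Equiv.Perm.sign σ : ℤ) : ℚ) * ∏ i : Fin d,
          invFact ((k i : ℤ) + (d : ℤ) - 1 - ((σ i : ℕ) : ℤ)))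
        * ∏ i : Fin d, ((Nat.factorial (k i + d - 1) : ℕ) : ℚ)
      = ((Equiv.Perm.sign σ : ℤ) : ℚ) * ∏ i : Fin d,
          (((k i + d - 1).descFactorial (σ i) : ℕ) : ℚ) := by
    intro σ
    rw [mul_assoc, ← Finset.prod_mul_distrib]
    congr 1
    exact Finset.prod_congr rfl fun i _ => key σ i
  rw [Finset.sum_congr rfl fun σ _ => step1 σ]
  -- now identify with a determinant
  have hdet : (∑ σ : Equiv.Perm (Fin d), ((Equiv.Perm.sign σ : ℤ) : ℚ) *
        ∏ i : Fin d, (((k i + d - 1).descFactorial (σ i) : ℕ) : ℚ))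
      = (Matrix.of fun i j : Fin d =>
          ((descPochhammer ℚ (j : ℕ)).eval (((k i + d - 1 : ℕ) : ℚ)))).det := by
    rw [← Matrix.det_transpose, Matrix.det_apply]
    refine Finset.sum_congr rfl fun σ _ => ?_
    rw [Units.smul_def, zsmul_eq_mul]
    congr 1
    refine Finset.prod_congr rfl fun i _ => ?_
    rw [Matrix.transpose_apply, Matrix.of_apply, descPochhammer_eval_eq_descFactorial]
  rw [hdet,
    ← Matrix.det_eval_matrixOfPolynomials_eq_det_vandermonde
      (fun i => ((k i + d - 1 : ℕ) : ℚ)) (fun j => descPochhammer ℚ (j : ℕ))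
      (fun j => descPochhammer_natDegree ℚ _)
      (fun j => monic_descPochhammer ℚ _),
    Matrix.det_vandermonde]
  refine Finset.prod_congr rfl fun i _ => Finset.prod_congr rfl fun j _ => ?_
  have hd : 1 ≤ d := i.pos
  have h1 : 1 ≤ k j + d := by omega
  have h2 : 1 ≤ k i + d := by omega
  push_cast [Nat.cast_sub, h1, h2]
  ring

theorem phiC_eq (d : ℕ) (k : Fin d → ℕ) :
    phiC d (fun i => (k i : ℤ)) =
      (-1) ^ (d * (d - 1) / 2) *
        (∏ p ∈ Finset.univ.filter (fun p : Fin d × Fin d => p.1 < p.2),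
          ((k p.1 : ℚ) - (k p.2 : ℚ))) /
        ∏ i : Fin d, ((Nat.factorial (k i + d - 1) : ℕ) : ℚ) := by
  have hF : (∏ i : Fin d, ((Nat.factorial (k i + d - 1) : ℕ) : ℚ)) ≠ 0 := by
    refine Finset.prod_ne_zero_iff.mpr fun i _ => ?_
    exact_mod_cast (Nat.factorial_pos _).ne'
  rw [eq_div_iff hF, phiC_mul_fact]
  rw [prod_pairs (fun i j => ((k i : ℚ) - (k j : ℚ)))]
  have : ∀ i : Fin d, ∏ j ∈ Ioi i, ((k i : ℚ) - (k j : ℚ))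
      = (-1 : ℚ) ^ (Ioi i).card * ∏ j ∈ Ioi i, ((k j : ℚ) - (k i : ℚ)) := by
    intro i
    rw [← Finset.prod_const, ← Finset.prod_mul_distrib]
    exact Finset.prod_congr rfl fun j _ => by ring
  rw [Finset.prod_congr rfl fun i _ => this i, Finset.prod_mul_distrib,
    Finset.prod_pow_eq_pow_sum, sum_card_Ioi]
  rw [← mul_assoc, ← pow_add, ← two_mul, pow_mul]
  norm_num

/-- **Evaluation formula.**  For nonnegative integers `k_0, …, k_{d-1}`,
`Φ(∏_i t_i^{k_i}) = (-1)^{d(d-1)/2} · ∏_{i<j}(k_i - k_j) / ∏_i (k_i + d - 1)!`. -/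
theorem Phi_monomial (A : Type*) [CommRing A] [Algebra ℚ A] (d : ℕ) (k : Fin d → ℕ) :
    Phi A d (AddMonoidAlgebra.single (fun i => (k i : ℤ)) 1) =
      algebraMap ℚ A ((-1) ^ (d * (d - 1) / 2) *
        (∏ p ∈ Finset.univ.filter (fun p : Fin d × Fin d => p.1 < p.2),
          ((k p.1 : ℚ) - (k p.2 : ℚ))) /
        ∏ i : Fin d, ((Nat.factorial (k i + d - 1) : ℕ) : ℚ)) := by
  rw [Phi, AddMonoidAlgebra.coeff_single, Finsupp.sum_single_index (by simp), ← phiC_eq,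
    Algebra.algebraMap_eq_smul_one]
end

section
/- With Φ as above, if f is a symmetric Laurent polynomial in t_0,...,t_{d-1}, then Φ(∏_{i=0}^{d-1} t_i^{-(d-1-i)} · f) = (-1)^{d(d-1)/2} · Φ(∏_{i=0}^{d-1} t_i^{-i} · f). -/
open Finset

/-- The Laurent monomial `t^m = ∏_i t_i^{m_i}` with coefficient `a`. -/
noncomputable def monoL (A : Type*) [CommRing A] {d : ℕ} (m : Fin d → ℤ) (a : A) :
    AddMonoidAlgebra A (Fin d → ℤ) := AddMonoidAlgebra.single m a

lemma rev_castSucc_eq (n : ℕ) (y : Fin n) :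
    Fin.rev (Fin.castSucc y) = Fin.castSucc (Fin.rev y) + 1 := by
  ext
  rw [Fin.val_rev, Fin.val_add_one_of_lt]
  · simp only [Fin.coe_castSucc, Fin.val_rev]; omega
  · rw [Fin.lt_iff_val_lt_val]
    simp only [Fin.coe_castSucc, Fin.val_rev, Fin.val_last]; omega

lemma sign_revPerm : ∀ n : ℕ,
    Equiv.Perm.sign (Fin.revPerm : Equiv.Perm (Fin n)) = (-1) ^ (n * (n - 1) / 2)
  | 0 => by decide
  | (n+1) => by
    have key : (Fin.revPerm : Equiv.Perm (Fin (n+1))) =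
        finRotate (n+1) *
          (Fin.revPerm : Equiv.Perm (Fin n)).viaFintypeEmbedding Fin.castSuccEmb := by
      ext x
      refine Fin.lastCases ?_ (fun y => ?_) x
      · have h : (Fin.last n) ∉ Set.range (Fin.castSuccEmb : Fin n ↪ Fin (n+1)) := by
          simp only [Set.mem_range, Fin.coe_castSuccEmb, not_exists]
          exact fun y => (Fin.castSucc_lt_last y).ne
        simp [Equiv.Perm.viaFintypeEmbedding_apply_notMem_range _ _ h, Fin.rev_last]
      · have h := Equiv.Perm.viaFintypeEmbedding_apply_image Fin.revPerm Fin.castSuccEmb y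
        simp only [Fin.coe_castSuccEmb] at h ⊢
        simp only [Equiv.Perm.coe_mul, Function.comp_apply, h, Fin.revPerm_apply,
          finRotate_succ_apply]
        exact congrArg Fin.val (rev_castSucc_eq n y)
    rw [key, map_mul, sign_finRotate, Equiv.Perm.viaFintypeEmbedding_sign, sign_revPerm n,
      ← pow_add]
    congr 1
    have h : (n+1)*n = n*(n-1) + 2*n := by
      cases n with
      | zero => rfl
      | succ k => simp only [Nat.succ_sub_one]; ring
    simp only [Nat.add_sub_cancel, h, Nat.add_mul_div_left _ _ (by norm_num : 0 < 2)]
    omega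

lemma phiC_comp (d : ℕ) (m : Fin d → ℤ) (τ : Equiv.Perm (Fin d)) :
    phiC d (m ∘ τ) = ((Equiv.Perm.sign τ : ℤ) : ℚ) * phiC d m := by
  unfold phiC
  rw [Finset.mul_sum]
  refine Fintype.sum_equiv (Equiv.mulRight τ⁻¹) _ _ (fun σ => ?_)
  simp only [Equiv.coe_mulRight]
  rw [← mul_assoc]
  congr 1
  · have hs : Equiv.Perm.sign τ * Equiv.Perm.sign (σ * τ⁻¹) = Equiv.Perm.sign σ := by
      rw [map_mul, map_inv, mul_comm, mul_assoc, inv_mul_cancel, mul_one]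
    exact_mod_cast congrArg (fun u : ℤˣ => ((u : ℤ) : ℚ)) hs.symm
  · rw [← Equiv.prod_comp τ
      (fun j => invFact (m j + (d:ℤ) - 1 - ((((σ * τ⁻¹) : Equiv.Perm (Fin d)) j : ℕ) : ℤ)))]
    exact Finset.prod_congr rfl fun i _ => by simp [Equiv.Perm.mul_apply]

/-- Precomposition with `τ.symm`, as an additive monoid hom on exponent vectors. -/
def compHom {d : ℕ} (τ : Equiv.Perm (Fin d)) : (Fin d → ℤ) →+ (Fin d → ℤ) where
  toFun m := m ∘ τ.symm
  map_zero' := rfl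
  map_add' _ _ := rfl

lemma permL_mul {A : Type*} [CommRing A] {d : ℕ} (τ : Equiv.Perm (Fin d))
    (g h : AddMonoidAlgebra A (Fin d → ℤ)) :
    permL τ (g * h) = permL τ g * permL τ h :=
  (AddMonoidAlgebra.mapDomain_mul (compHom τ) g h :)

lemma Phi_permL (A : Type*) [CommRing A] [Algebra ℚ A] (d : ℕ) (τ : Equiv.Perm (Fin d))
    (g : AddMonoidAlgebra A (Fin d → ℤ)) :
    Phi A d (permL τ g) = ((Equiv.Perm.sign τ : ℤ) : ℚ) • Phi A d g := by
  unfold Phi permL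
  rw [AddMonoidAlgebra.coeff_ofCoeff, Finsupp.sum_mapDomain_index (by intro _; exact smul_zero _)
    (by intro _ _ _; exact smul_add _ _ _)]
  rw [Finsupp.smul_sum]
  refine Finsupp.sum_congr fun m _ => ?_
  rw [phiC_comp d m τ.symm, Equiv.Perm.sign_symm, mul_smul]

/-- If `f` is a symmetric Laurent polynomial in `t_0, …, t_{d-1}`, then
`Φ(∏_i t_i^{-(d-1-i)} · f) = (-1)^{d(d-1)/2} · Φ(∏_i t_i^{-i} · f)`. -/
theorem Phi_staircase_symm (A : Type*) [CommRing A] [Algebra ℚ A] (d : ℕ)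
    (f : AddMonoidAlgebra A (Fin d → ℤ)) (hf : ∀ σ : Equiv.Perm (Fin d), permL σ f = f) :
    Phi A d (monoL A (fun i : Fin d => -((d : ℤ) - 1 - (i : ℕ))) 1 * f) =
      ((-1 : ℤ) ^ (d * (d - 1) / 2)) •
        Phi A d (monoL A (fun i : Fin d => -((i : ℕ) : ℤ)) 1 * f) := by
  set τ : Equiv.Perm (Fin d) := Fin.revPerm with hτ
  have hm : (fun i : Fin d => -((d : ℤ) - 1 - (i : ℕ)))
      = (fun i : Fin d => -((i : ℕ) : ℤ)) ∘ ⇑τ.symm := by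
    funext i
    simp only [hτ, Function.comp_apply, Fin.revPerm_symm, Fin.revPerm_apply, Fin.val_rev]
    have := i.isLt
    omega
  have h1 : monoL A (fun i : Fin d => -((d : ℤ) - 1 - (i : ℕ))) 1
      = permL τ (monoL A (fun i : Fin d => -((i : ℕ) : ℤ)) 1) := by
    unfold monoL permL
    rw [AddMonoidAlgebra.coeff_single, Finsupp.mapDomain_single, hm, AddMonoidAlgebra.ofCoeff_single]
  conv_lhs => rw [h1, ← hf τ, ← permL_mul, Phi_permL]
  rw [hτ, sign_revPerm d,
    show ((((-1 : ℤˣ) ^ (d * (d - 1) / 2) : ℤˣ) : ℤ) : ℚ)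
      = (((-1 : ℤ) ^ (d * (d - 1) / 2) : ℤ) : ℚ) by push_cast; ring,
    Int.cast_smul_eq_zsmul]
end

section
/- For nonnegative integers p_0,...,p_{d-1} and Chern roots α_1,...,α_r (so s_k = h_k(α)), the coefficient of ξ_0^{r-1}···ξ_{d-1}^{r-d} in ξ_0^{p_0}···ξ_{d-1}^{p_{d-1}} (with respect to the free basis of R_2 over R_3 as above) equals the Schur-type determinant det[s_{p_i + j - r + 1}]_{0 ≤ i,j ≤ d-1}, with s_m = 0 for m < 0. -/
open MvPolynomial Finset

noncomputable section

/-- Evaluation of a polynomial in `r` "Chern-class variables" (standing for `c_1, …, c_r`)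
at `c_i = e_i(ξ_0, …, ξ_{r-1})`, landing in `R₁ = A[ξ_0, …, ξ_{r-1}]`.  An element of
`R₃ = A[c_1, …, c_r]` is represented as such an evaluation. -/
def evalChern (A : Type*) [CommRing A] (r : ℕ) (q : MvPolynomial (Fin r) A) :
    MvPolynomial (Fin r) A :=
  aeval (fun i : Fin r => esymm (Fin r) A ((i : ℕ) + 1)) q

/-- The index set of the basis monomials `ξ_0^{i_0}⋯ξ_{d-1}^{i_{d-1}}`, `0 ≤ i_l ≤ r-l-1`,
of `R₂` over `R₃`. -/
def basisIdx (r d : ℕ) : Finset (Fin d → ℕ) :=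
  Fintype.piFinset (fun l : Fin d => Finset.range (r - (l : ℕ)))

/-- The top basis index `(r-1, r-2, …, r-d)`. -/
def topIdx (r d : ℕ) : Fin d → ℕ := fun l => r - 1 - (l : ℕ)

/-- The basis monomial `ξ_0^{v_0}⋯ξ_{d-1}^{v_{d-1}}` in `R₁` (with `d ≤ r`). -/
def xiMono (A : Type*) [CommRing A] {r d : ℕ} (hdr : d ≤ r) (v : Fin d → ℕ) :
    MvPolynomial (Fin r) A :=
  ∏ l : Fin d, (X (Fin.castLE hdr l) : MvPolynomial (Fin r) A) ^ v l

/-- The full Vandermonde product `Δ(ξ_0, …, ξ_{r-1})`. -/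
def vandXi (A : Type*) [CommRing A] (r : ℕ) : MvPolynomial (Fin r) A :=
  ∏ p ∈ Finset.univ.filter (fun p : Fin r × Fin r => p.1 < p.2),
    ((X p.1 : MvPolynomial (Fin r) A) - X p.2)

/-- `s_m = h_m(ξ_0,…,ξ_{r-1})` for an integer index, with `s_m = 0` for `m < 0`:  the
Segre coefficients, i.e. the complete homogeneous symmetric polynomials in the roots. -/
def segreInt (A : Type*) [CommRing A] (r : ℕ) (m : ℤ) : MvPolynomial (Fin r) A :=
  if 0 ≤ m then hsymm (Fin r) A m.toNat else 0

namespace SchurAux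

variable {A : Type*} [CommRing A] {r : ℕ}

def eS (A : Type*) [CommRing A] {r : ℕ} (U : Finset (Fin r)) (k : ℕ) : MvPolynomial (Fin r) A :=
  ∑ t ∈ U.powersetCard k, ∏ i ∈ t, X i

def hS (A : Type*) [CommRing A] {r : ℕ} (U : Finset (Fin r)) (m : ℕ) : MvPolynomial (Fin r) A :=
  ∑ f ∈ U.sym m, (f.1.map X).prod

def hSI (A : Type*) [CommRing A] {r : ℕ} (U : Finset (Fin r)) (m : ℤ) : MvPolynomial (Fin r) A :=
  if 0 ≤ m then hS A U m.toNat else 0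

lemma hS_zero (U : Finset (Fin r)) : hS A U 0 = 1 := by
  rw [hS, Finset.sym_zero, Finset.sum_singleton]
  show (Multiset.map X (Sym.nil : Sym (Fin r) 0).1).prod = 1
  rw [show (Sym.nil : Sym (Fin r) 0).1 = 0 from rfl]
  simp

lemma hS_empty (m : ℕ) : hS A (∅ : Finset (Fin r)) (m + 1) = 0 := by
  simp [hS, Finset.sym_empty]

lemma hS_univ (m : ℕ) : hS A (univ : Finset (Fin r)) m = hsymm (Fin r) A m := by
  rw [hS, Finset.sym_univ, hsymm]

lemma eS_zero (U : Finset (Fin r)) : eS A U 0 = 1 := by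
  simp [eS]

lemma eS_of_card_lt {U : Finset (Fin r)} {k : ℕ} (h : U.card < k) : eS A U k = 0 := by
  rw [eS, Finset.powersetCard_eq_empty.2 h, Finset.sum_empty]

lemma eS_insert {a : Fin r} {U : Finset (Fin r)} (ha : a ∉ U) (k : ℕ) :
    eS A (insert a U) (k + 1) = eS A U (k + 1) + X a * eS A U k := by
  rw [eS, Finset.powersetCard_succ_insert ha, Finset.sum_union, eS, eS, Finset.mul_sum,
    Finset.sum_image]
  · congr 1
    refine Finset.sum_congr rfl fun t ht => ?_
    rw [Finset.prod_insert fun hat => ha ((Finset.mem_powersetCard.1 ht).1 hat)]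
  · intro s hs t ht hst
    have hsa : a ∉ s := fun h => ha ((Finset.mem_powersetCard.1 hs).1 h)
    have hta : a ∉ t := fun h => ha ((Finset.mem_powersetCard.1 ht).1 h)
    rw [← Finset.erase_insert hsa, ← Finset.erase_insert hta, hst]
  · rw [Finset.disjoint_left]
    intro t ht ht'
    obtain ⟨s, hs, rfl⟩ := Finset.mem_image.1 ht'
    have : a ∈ (insert a s : Finset (Fin r)) := Finset.mem_insert_self a s
    exact ha ((Finset.mem_powersetCard.1 ht).1 this)

lemma prod_map_cons (a : Fin r) {m : ℕ} (g : Sym (Fin r) m) :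
    (Multiset.map (X (R := A)) ((a ::ₛ g : Sym (Fin r) (m+1)) : Multiset (Fin r))).prod
      = X a * (Multiset.map X (g : Multiset (Fin r))).prod := by
  rcases g with ⟨g, hg⟩
  show (Multiset.map (X (R := A)) (a ::ₘ g)).prod = _
  rw [Multiset.map_cons, Multiset.prod_cons]
  rfl

/-- removal recurrence for `hS`. -/
lemma hS_erase {a : Fin r} {U : Finset (Fin r)} (ha : a ∈ U) (m : ℕ) :
    hS A U (m + 1) = hS A (U.erase a) (m + 1) + X a * hS A U m := by
  classical
  have hsplit : (U.sym (m+1)).filter (fun f => a ∈ f) ∪ (U.sym (m+1)).filter (fun f => a ∉ f)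
      = U.sym (m + 1) := Finset.filter_union_filter_not_eq _ _
  rw [hS, ← hsplit, Finset.sum_union (Finset.disjoint_filter_filter_not _ _ _)]
  have h1 : ((U.sym (m+1)).filter (fun f => a ∉ f)) = (U.erase a).sym (m+1) := by
    ext f
    simp only [Finset.mem_filter, Finset.mem_sym_iff, Finset.mem_erase]
    constructor
    · rintro ⟨h1, h2⟩ b hb
      exact ⟨fun hba => h2 (hba ▸ hb), h1 b hb⟩
    · intro h
      exact ⟨fun b hb => (h b hb).2, fun haf => (h a haf).1 rfl⟩
  have h2 : ∑ f ∈ (U.sym (m+1)).filter (fun f => a ∈ f), ((f : Sym (Fin r) (m+1)).1.map X).prod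
      = X a * hS A U m := by
    rw [hS, Finset.mul_sum]
    refine Finset.sum_bij' (fun f hf => Sym.erase f a (Finset.mem_filter.1 hf).2)
      (fun g hg => a ::ₛ g) ?_ ?_ ?_ ?_ ?_
    · intro f hf
      rw [Finset.mem_sym_iff]
      intro b hb
      have hb' : b ∈ ((f.erase a (Finset.mem_filter.1 hf).2 : Sym (Fin r) m) : Multiset (Fin r)) := hb
      rw [Sym.coe_erase] at hb'
      exact (Finset.mem_sym_iff.1 (Finset.mem_filter.1 hf).1) b (Multiset.mem_of_mem_erase hb')
    · intro g hg
      rw [Finset.mem_filter]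
      refine ⟨Finset.mem_sym_iff.2 fun b hb => ?_, Sym.mem_cons_self a g⟩
      rcases Sym.mem_cons.1 hb with h | h
      · exact h ▸ ha
      · exact Finset.mem_sym_iff.1 hg b h
    · intro f hf
      exact Sym.cons_erase _
    · intro g hg
      exact Sym.erase_cons_head g a _
    · intro f hf
      conv_lhs => rw [← Sym.cons_erase (Finset.mem_filter.1 hf).2]
      exact prod_map_cons a _
  rw [h1, h2, add_comm]
  rfl


lemma hSI_ofNat (U : Finset (Fin r)) (m : ℕ) : hSI A U (m : ℤ) = hS A U m := by
  rw [hSI, if_pos (by positivity), Int.toNat_natCast]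

lemma hSI_neg (U : Finset (Fin r)) {m : ℤ} (h : m < 0) : hSI A U m = 0 := by
  rw [hSI, if_neg (by omega)]

lemma hS_singleton (a : Fin r) (m : ℕ) : hS A {a} m = X a ^ m := by
  induction m with
  | zero => rw [hS_zero, pow_zero]
  | succ m ih =>
      rw [hS_erase (Finset.mem_singleton_self a) m, Finset.erase_singleton, hS_empty, ih,
        zero_add, pow_succ, mul_comm]


lemma hSI_erase {a : Fin r} {T : Finset (Fin r)} (ha : a ∈ T) (n : ℤ) :
    hSI A T n - X a * hSI A T (n - 1) = hSI A (T.erase a) n := by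
  rcases lt_trichotomy n 0 with h | h | h
  · rw [hSI_neg _ h, hSI_neg T (show n - 1 < 0 by omega), hSI_neg _ h, mul_zero, sub_zero]
  · subst h
    have h1 : hSI A T ((0:ℤ) - 1) = 0 := hSI_neg T (by norm_num)
    have h2 : hSI A T 0 = 1 := by
      rw [show (0:ℤ) = ((0:ℕ):ℤ) from rfl, hSI_ofNat, hS_zero]
    have h3 : hSI A (T.erase a) 0 = 1 := by
      rw [show (0:ℤ) = ((0:ℕ):ℤ) from rfl, hSI_ofNat, hS_zero]
    rw [h1, h2, h3, mul_zero, sub_zero]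
  · obtain ⟨k, rfl⟩ : ∃ k : ℕ, n = ((k:ℤ) + 1) := ⟨(n-1).toNat, by omega⟩
    rw [show ((k:ℤ) + 1 - 1) = ((k:ℕ):ℤ) from by ring, show ((k:ℤ)+1) = (((k+1:ℕ)):ℤ) from by
      push_cast; ring, hSI_ofNat, hSI_ofNat, hSI_ofNat, hS_erase ha k]
    ring

lemma L (S U : Finset (Fin r)) (hd : Disjoint S U) (m : ℤ) :
    ∑ k ∈ range (S.card + 1),
      (-1 : MvPolynomial (Fin r) A)^k * (eS A S k * hSI A (S ∪ U) ((m : ℤ) - k)) = hSI A U m := by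
  classical
  induction S using Finset.cons_induction generalizing m with
  | empty =>
      simp only [Finset.card_empty, zero_add, Finset.range_one, Finset.sum_singleton, pow_zero,
        one_mul, eS_zero, Finset.empty_union, Nat.cast_zero, sub_zero]
  | cons a S' ha ih =>
      have hd' : Disjoint S' U := by
        rw [Finset.cons_eq_insert] at hd
        exact Finset.disjoint_insert_left.mp hd |>.2
      have haU : a ∉ U := by
        rw [Finset.cons_eq_insert] at hd
        exact (Finset.disjoint_insert_left.mp hd).1
      have haSU : a ∉ S' ∪ U := by simp [ha, haU]
      have hT : (Finset.cons a S' ha) ∪ U = insert a (S' ∪ U) := by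
        rw [Finset.cons_eq_insert, Finset.insert_union]
      set T := insert a (S' ∪ U) with hTdef
      have key : ∀ n : ℤ, hSI A T n - X a * hSI A T (n - 1) = hSI A (S' ∪ U) n := by
        intro n
        have h := hSI_erase (A := A) (Finset.mem_insert_self a (S' ∪ U)) n
        rw [Finset.erase_insert haSU] at h
        rw [← hTdef] at h
        exact h
      set c := S'.card with hc
      have hcard : (Finset.cons a S' ha).card = c + 1 := Finset.card_cons ha
      rw [hcard, hT]
      rw [Finset.cons_eq_insert] at *
      set P : ℕ → MvPolynomial (Fin r) A :=
        fun k => (-1 : MvPolynomial (Fin r) A)^k * (eS A S' k * hSI A T (m - (k:ℕ))) with hP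
      set Q : ℕ → MvPolynomial (Fin r) A :=
        fun k => (-1 : MvPolynomial (Fin r) A)^(k+1) *
          (X a * eS A S' k * hSI A T (m - ((k+1:ℕ):ℤ))) with hQ
      have h0 : ∑ k ∈ range (c+1), P k
          = hSI A T m + ∑ k ∈ range (c+1),
              (-1 : MvPolynomial (Fin r) A)^(k+1) * (eS A S' (k+1) * hSI A T (m - ((k+1:ℕ):ℤ))) := by
        have hext : ∑ k ∈ range (c+2), P k = ∑ k ∈ range (c+1), P k := by
          rw [Finset.sum_range_succ, hP]
          simp only [eS_of_card_lt (show S'.card < c + 1 by omega), zero_mul, mul_zero, add_zero]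
        rw [← hext, Finset.sum_range_succ' P (c+1), add_comm]
        congr 1
        rw [hP]
        simp [eS_zero]
      rw [Finset.sum_range_succ' (fun k => (-1 : MvPolynomial (Fin r) A)^k *
          (eS A (insert a S') k * hSI A T (m - (k:ℕ)))) (c+1)]
      have hsplit : ∑ k ∈ range (c+1), (-1 : MvPolynomial (Fin r) A)^(k+1) *
            (eS A (insert a S') (k+1) * hSI A T (m - ((k+1:ℕ):ℤ)))
          = (∑ k ∈ range (c+1), (-1 : MvPolynomial (Fin r) A)^(k+1) *
              (eS A S' (k+1) * hSI A T (m - ((k+1:ℕ):ℤ))))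
            + ∑ k ∈ range (c+1), Q k := by
        rw [← Finset.sum_add_distrib]
        refine Finset.sum_congr rfl fun k hk => ?_
        rw [eS_insert ha, hQ]
        ring
      have hPQ : ∀ k, P k + Q k
          = (-1 : MvPolynomial (Fin r) A)^k * (eS A S' k * hSI A (S' ∪ U) (m - (k:ℕ))) := by
        intro k
        rw [← key (m - (k:ℕ))]
        simp only [hP, hQ]
        rw [show (m - ((k+1:ℕ):ℤ)) = m - (k:ℕ) - 1 by push_cast; ring]
        ring
      calc ∑ k ∈ range (c+1), (-1 : MvPolynomial (Fin r) A)^(k+1) *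
            (eS A (insert a S') (k+1) * hSI A T (m - ((k+1:ℕ):ℤ)))
            + (-1 : MvPolynomial (Fin r) A)^0 * (eS A (insert a S') 0 * hSI A T (m - ((0:ℕ):ℤ)))
          = ((∑ k ∈ range (c+1), P k) - hSI A T m) + (∑ k ∈ range (c+1), Q k) + hSI A T m := by
            rw [hsplit, h0, eS_zero]
            push_cast
            simp only [sub_zero]
            ring
        _ = ∑ k ∈ range (c+1), (P k + Q k) := by
            rw [Finset.sum_add_distrib]
            ring
        _ = ∑ k ∈ range (c+1), (-1 : MvPolynomial (Fin r) A)^k *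
              (eS A S' k * hSI A (S' ∪ U) (m - (k:ℕ))) :=
            Finset.sum_congr rfl fun k _ => hPQ k
        _ = hSI A U m := ih hd' m

lemma KI (j : Fin r) (m : ℤ) :
    ∑ k ∈ range r, (-1 : MvPolynomial (Fin r) A)^k *
      (eS A (Finset.univ.erase j) k * hSI A Finset.univ (m - (k:ℕ))) = hSI A {j} m := by
  have hdisj : Disjoint (Finset.univ.erase j) ({j} : Finset (Fin r)) :=
    Finset.disjoint_singleton_right.2 (Finset.notMem_erase j Finset.univ)
  have hcard : (Finset.univ.erase j).card + 1 = r := by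
    rw [Finset.card_erase_of_mem (Finset.mem_univ j), Finset.card_univ, Fintype.card_fin]
    have : 0 < r := j.pos
    omega
  have hun : (Finset.univ.erase j) ∪ {j} = Finset.univ := by
    rw [Finset.union_comm, ← Finset.insert_eq, Finset.insert_erase (Finset.mem_univ j)]
  have := L (A := A) (Finset.univ.erase j) ({j} : Finset (Fin r)) hdisj m
  rw [hcard, hun] at this
  exact this

lemma segreInt_eq_hSI (n : ℤ) : segreInt A r n = hSI A univ n := by
  rw [segreInt, hSI]
  split
  · rw [hS_univ]
  · rfl

lemma segreInt_of_neg {n : ℤ} (h : n < 0) : segreInt A r n = 0 := by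
  rw [segreInt, if_neg (by omega)]

lemma segreInt_zero' : segreInt A r 0 = 1 := by
  rw [segreInt, if_pos le_rfl]
  exact hsymm_zero _ _

/-- matrix of signed elementary symmetric functions with the variable of the column removed -/
def Fm (A : Type*) [CommRing A] (r : ℕ) : Matrix (Fin r) (Fin r) (MvPolynomial (Fin r) A) :=
  Matrix.of fun k j => (-1 : MvPolynomial (Fin r) A)^(r - 1 - (k:ℕ)) *
    eS A (Finset.univ.erase j) (r - 1 - (k:ℕ))

lemma entry_eq (j : Fin r) (m : ℕ) :
    (X j : MvPolynomial (Fin r) A) ^ m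
      = ∑ k : Fin r, segreInt A r ((m : ℤ) - (r - 1) + k) * Fm A r k j := by
  have hKI := KI (A := A) j (m : ℤ)
  rw [hSI_ofNat, hS_singleton] at hKI
  rw [← hKI]
  rw [← Fin.sum_univ_eq_sum_range
    (fun k => (-1 : MvPolynomial (Fin r) A)^k *
      (eS A (Finset.univ.erase j) k * hSI A Finset.univ ((m:ℤ) - (k:ℕ)))) r]
  refine Finset.sum_nbij' (i := fun k => Fin.rev k) (j := fun k => Fin.rev k) ?_ ?_ ?_ ?_ ?_
  · intro k _; exact Finset.mem_univ _
  · intro k _; exact Finset.mem_univ _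
  · intro k _; exact Fin.rev_rev k
  · intro k _; exact Fin.rev_rev k
  · intro k _
    have hk : (k : ℕ) ≤ r - 1 := by omega
    have hv : ((Fin.rev k : Fin r) : ℕ) = r - 1 - (k : ℕ) := by
      rw [Fin.val_rev]; omega
    have hcast : (((r - 1 - (k:ℕ) : ℕ)) : ℤ) = (r : ℤ) - 1 - (k : ℕ) := by
      have : (k:ℕ) < r := k.2
      omega
    rw [segreInt_eq_hSI, Fm, Matrix.of_apply, hv, hcast]
    rw [show r - 1 - (r - 1 - (k:ℕ)) = (k:ℕ) by omega,
      show (m:ℤ) - ((r:ℤ) - 1) + ((r:ℤ) - 1 - ((k:ℕ):ℤ)) = (m:ℤ) - ((k:ℕ):ℤ) by ring]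
    ring

/-- the Jacobi-Trudi style matrix -/
def Hm (A : Type*) [CommRing A] (r : ℕ) (w : Fin r → ℕ) :
    Matrix (Fin r) (Fin r) (MvPolynomial (Fin r) A) :=
  Matrix.of fun i k => segreInt A r ((w i : ℤ) - ((r:ℤ) - 1) + (k:ℕ))

def aA (A : Type*) [CommRing A] (r : ℕ) (w : Fin r → ℕ) : MvPolynomial (Fin r) A :=
  Matrix.det (Matrix.of fun i j : Fin r => (X j : MvPolynomial (Fin r) A) ^ w i)

lemma aA_eq_det_mul (w : Fin r → ℕ) :
    aA A r w = (Hm A r w).det * (Fm A r).det := by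
  have hmat : (Matrix.of fun i j : Fin r => (X j : MvPolynomial (Fin r) A) ^ w i)
      = Hm A r w * Fm A r := by
    refine Matrix.ext fun i j => ?_
    rw [Matrix.mul_apply]
    exact entry_eq (A := A) j (w i)
  rw [aA, hmat, Matrix.det_mul]

/-- determinant reduction: rows below `d` are unit-triangular -/
lemma detReduce (d : ℕ) : ∀ (n : ℕ) (hdn : d ≤ n) (a : Fin n → ℤ),
    (∀ i : Fin n, d ≤ (i:ℕ) → a i = -(i:ℤ)) →
    (Matrix.of fun i k : Fin n => segreInt A r (a i + (k:ℕ))).det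
      = (Matrix.of fun i k : Fin d => segreInt A r (a (Fin.castLE hdn i) + (k:ℕ))).det := by
  intro n
  induction n with
  | zero =>
      intro hdn a _
      have hd0 : d = 0 := Nat.le_zero.mp hdn
      subst hd0
      rfl
  | succ n ih =>
      intro hdn a ha
      rcases Nat.lt_or_ge n.succ d with h | h
      · omega
      rcases Nat.eq_or_lt_of_le hdn with h | h
      · subst h
        rfl
      have hd : d ≤ n := by omega
      rw [Matrix.det_succ_row _ (Fin.last n)]
      rw [Finset.sum_eq_single (Fin.last n)]
      · have hlast : a (Fin.last n) = -(n : ℤ) := by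
          have := ha (Fin.last n) (by simpa using hd)
          simpa using this
        have h00 : (Matrix.of fun i k : Fin (n+1) => segreInt A r (a i + (k:ℕ)))
            (Fin.last n) (Fin.last n) = 1 := by
          rw [Matrix.of_apply, hlast]
          simp only [Fin.val_last]
          rw [show (-(n:ℤ) + (n:ℕ)) = 0 by push_cast; ring, segreInt_zero']
        rw [h00, Fin.succAbove_last]
        have hsub : ((Matrix.of fun i k : Fin (n+1) => segreInt A r (a i + (k:ℕ))).submatrix
            Fin.castSucc Fin.castSucc)
            = Matrix.of fun i k : Fin n => segreInt A r ((a ∘ Fin.castSucc) i + (k:ℕ)) := by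
          ext i k
          rfl
        rw [hsub, ih hd (a ∘ Fin.castSucc) (fun i hi => by
          have := ha (Fin.castSucc i) (by simpa using hi)
          simpa using this)]
        have : ∀ i : Fin d, (a ∘ Fin.castSucc) (Fin.castLE hd i) = a (Fin.castLE hdn i) := by
          intro i; rfl
        simp only [this]
        simp [Fin.val_last]
      · intro j _ hj
        have hjn : (j : ℕ) < n := by
          rcases Nat.lt_or_ge (j:ℕ) n with h' | h'
          · exact h'
          · exfalso; exact hj (by ext; simp [Fin.val_last]; omega)
        have hlast : a (Fin.last n) = -(n : ℤ) := by
          have := ha (Fin.last n) (by simpa using hd)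
          simpa using this
        have : (Matrix.of fun i k : Fin (n+1) => segreInt A r (a i + (k:ℕ)))
            (Fin.last n) j = 0 := by
          rw [Matrix.of_apply, hlast, segreInt_of_neg (by omega)]
        rw [this]
        ring
      · intro h'
        exact absurd (Finset.mem_univ _) h'


def Pw (A : Type*) [CommRing A] {r : ℕ} (w : Fin r → ℕ) : MvPolynomial (Fin r) A :=
  ∏ j : Fin r, (X j : MvPolynomial (Fin r) A) ^ w j

def Alt (A : Type*) [CommRing A] {r : ℕ} (f : MvPolynomial (Fin r) A) : MvPolynomial (Fin r) A :=
  ∑ σ : Equiv.Perm (Fin r),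
    ((Equiv.Perm.sign σ : ℤ) : MvPolynomial (Fin r) A) * rename (⇑σ) f

lemma Alt_sum {ι : Type*} (s : Finset ι) (g : ι → MvPolynomial (Fin r) A) :
    Alt A (∑ v ∈ s, g v) = ∑ v ∈ s, Alt A (g v) := by
  unfold Alt
  simp_rw [map_sum, Finset.mul_sum]
  rw [Finset.sum_comm]

lemma rename_evalChern (σ : Equiv.Perm (Fin r)) (q : MvPolynomial (Fin r) A) :
    rename (⇑σ) (evalChern A r q) = evalChern A r q := by
  have h : (rename (⇑σ)).comp (aeval (fun i : Fin r => esymm (Fin r) A ((i:ℕ) + 1)))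
      = aeval (fun i : Fin r => esymm (Fin r) A ((i:ℕ) + 1)) := by
    rw [comp_aeval]
    congr 1
    funext i
    exact esymm_isSymmetric (Fin r) A ((i:ℕ)+1) σ
  exact DFunLike.congr_fun h q

lemma Alt_evalChern_mul (q f : MvPolynomial (Fin r) A) :
    Alt A (evalChern A r q * f) = evalChern A r q * Alt A f := by
  unfold Alt
  rw [Finset.mul_sum]
  refine Finset.sum_congr rfl fun σ _ => ?_
  rw [map_mul, rename_evalChern]
  ring

lemma Alt_Pw (w : Fin r → ℕ) : Alt A (Pw A w) = aA A r w := by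
  unfold Alt Pw aA
  rw [Matrix.det_apply']
  rw [← Equiv.sum_comp (Equiv.inv (Equiv.Perm (Fin r)))
    (fun σ => ((Equiv.Perm.sign σ : ℤ) : MvPolynomial (Fin r) A) *
      ∏ i : Fin r, (Matrix.of fun i j : Fin r => (X j : MvPolynomial (Fin r) A) ^ w i) (σ i) i)]
  refine Finset.sum_congr rfl fun σ _ => ?_
  simp only [Equiv.inv_apply, Equiv.Perm.sign_inv, Matrix.of_apply]
  congr 1
  rw [map_prod]
  rw [← Equiv.prod_comp σ (fun i => (X i : MvPolynomial (Fin r) A) ^ w (σ⁻¹ i))]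
  refine Finset.prod_congr rfl fun i _ => ?_
  rw [Equiv.Perm.inv_def, Equiv.symm_apply_apply, map_pow, rename_X]

lemma aA_eq_zero {w : Fin r → ℕ} (hw : ¬ Function.Injective w) : aA A r w = 0 := by
  rw [Function.not_injective_iff] at hw
  obtain ⟨i, j, hij, hne⟩ := hw
  exact Matrix.det_zero_of_row_eq hne (by funext k; simp [hij])


lemma isRegular_X_sub_X {i j : Fin r} (hij : i ≠ j) :
    IsRegular ((X i : MvPolynomial (Fin r) A) - X j) := by
  classical
  set c : MvPolynomial (Fin r) A := X i - X j with hc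
  set u : Fin r → MvPolynomial (Fin r) A := Function.update X i (X i + X j) with hu
  set v : Fin r → MvPolynomial (Fin r) A := Function.update X i (X i - X j) with hv
  have hji : j ≠ i := fun h => hij h.symm
  have hcomp : (aeval v : MvPolynomial (Fin r) A →ₐ[A] MvPolynomial (Fin r) A).comp (aeval u)
      = AlgHom.id A (MvPolynomial (Fin r) A) := by
    refine MvPolynomial.algHom_ext fun l => ?_
    simp only [AlgHom.comp_apply, AlgHom.id_apply, aeval_X]
    by_cases hl : l = i
    · subst hl
      rw [hu, Function.update_self, map_add, aeval_X, aeval_X, hv, Function.update_self,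
        Function.update_of_ne hji]
      ring
    · rw [hu, Function.update_of_ne hl, aeval_X, hv, Function.update_of_ne hl]
  have hinj : Function.Injective
      (aeval u : MvPolynomial (Fin r) A →ₐ[A] MvPolynomial (Fin r) A) := by
    intro a b hab
    have := congrArg (aeval v : MvPolynomial (Fin r) A →ₐ[A] MvPolynomial (Fin r) A) hab
    simpa only [← AlgHom.comp_apply, hcomp, AlgHom.id_apply] using this
  have himg : (aeval u : MvPolynomial (Fin r) A →ₐ[A] MvPolynomial (Fin r) A) c = X i := by
    rw [hc, map_sub, aeval_X, aeval_X, hu, Function.update_self, Function.update_of_ne hji]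
    ring
  have hl : IsLeftRegular c := by
    intro a b hab
    have hab' : c * a = c * b := hab
    apply hinj
    have h2 : (aeval u) (c * a) = (aeval u) (c * b) := congrArg _ hab'
    rw [map_mul, map_mul, himg] at h2
    exact (MvPolynomial.isRegular_X (n := i)).left h2
  refine ⟨hl, fun a b hab => hl ?_⟩
  have hab' : a * c = b * c := hab
  show c * a = c * b
  rwa [mul_comm c a, mul_comm c b]

lemma isRegular_prod {ι : Type*} (s : Finset ι) (f : ι → MvPolynomial (Fin r) A)
    (h : ∀ i ∈ s, IsRegular (f i)) : IsRegular (∏ i ∈ s, f i) :=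
  Finset.prod_induction f IsRegular (fun _ _ ha hb => ha.mul hb) isRegular_one h

lemma isRegular_neg {a : MvPolynomial (Fin r) A} (h : IsRegular a) : IsRegular (-a) := by
  refine ⟨fun x y hxy => h.left ?_, fun x y hxy => h.right ?_⟩
  · have : -a * x = -a * y := hxy
    have := congrArg Neg.neg this
    simpa [neg_mul] using this
  · have : x * -a = y * -a := hxy
    have := congrArg Neg.neg this
    simpa [mul_neg] using this

lemma isRegular_aA_delta :
    IsRegular (aA A r (fun i : Fin r => r - 1 - (i:ℕ))) := by
  classical
  have hN : (Matrix.of fun i j : Fin r => (X j : MvPolynomial (Fin r) A) ^ (r - 1 - (i:ℕ)))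
      = ((Matrix.vandermonde (fun l : Fin r => (X l : MvPolynomial (Fin r) A))).submatrix
          id ⇑(Fin.revPerm : Equiv.Perm (Fin r))).transpose := by
    refine Matrix.ext fun i j => ?_
    simp only [Matrix.transpose_apply, Matrix.submatrix_apply, Matrix.vandermonde_apply, id,
      Matrix.of_apply]
    congr 1
    rw [show (Fin.revPerm (i : Fin r)) = Fin.rev i from rfl, Fin.val_rev]
    omega
  rw [aA, hN, Matrix.det_transpose, Matrix.det_permute', Matrix.det_vandermonde]
  have hreg : IsRegular (∏ i : Fin r, ∏ j ∈ Ioi i,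
      ((X j : MvPolynomial (Fin r) A) - X i)) := by
    refine isRegular_prod _ _ fun i _ => isRegular_prod _ _ fun j hj => ?_
    exact isRegular_X_sub_X (fun h => absurd h.symm (ne_of_lt (Finset.mem_Ioi.1 hj)))
  rcases Int.units_eq_one_or (Equiv.Perm.sign (Fin.revPerm : Equiv.Perm (Fin r))) with h | h
  · rw [h]; simpa using hreg
  · rw [h]
    push_cast
    rw [neg_one_mul]
    exact isRegular_neg hreg

lemma forced {w : Fin r → ℕ} (hinj : Function.Injective w)
    (hb : ∀ j : Fin r, w j ≤ r - 1 - (j:ℕ)) : ∀ j : Fin r, w j = r - 1 - (j:ℕ) := by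
  suffices aux : ∀ n : ℕ, ∀ j : Fin r, r - 1 - (j:ℕ) ≤ n → w j = r - 1 - (j:ℕ) from
    fun j => aux (r - 1 - (j:ℕ)) j le_rfl
  intro n
  induction n with
  | zero =>
      intro j hj
      have := hb j
      omega
  | succ n ih =>
      intro j hj
      rcases Nat.lt_or_ge (r - 1 - (j:ℕ)) (n+1) with h | h
      · exact ih j (by omega)
      have hj' : r - 1 - (j:ℕ) = n + 1 := by omega
      by_contra hne
      have hwj : w j ≤ n := by
        have := hb j
        omega
      have hrpos : 0 < r := j.pos
      have hlt : r - 1 - w j < r := by omega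
      set j' : Fin r := ⟨r - 1 - w j, hlt⟩ with hj'def
      have hjv : (j:ℕ) < r := j.2
      have hwjr : w j ≤ r - 1 := by
        have := hb j
        omega
      have hj'v : r - 1 - (j' : ℕ) = w j := by
        show r - 1 - (r - 1 - w j) = w j
        omega
      have hw' : w j' = w j := by
        rw [← hj'v]
        exact ih j' (by show r - 1 - (r - 1 - w j) ≤ n; omega)
      have hjj : j' = j := hinj hw'
      have : (j':ℕ) = (j:ℕ) := congrArg Fin.val hjj
      have : r - 1 - w j = (j:ℕ) := this
      omega


/-- extension of a basis exponent vector to all variables, with staircase tail -/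
def mu (r : ℕ) {d : ℕ} (hdr : d ≤ r) (v : Fin d → ℕ) : Fin r → ℕ :=
  fun j => if h : (j:ℕ) < d then v ⟨(j:ℕ), h⟩ else r - 1 - (j:ℕ)

def tt (r d : ℕ) : Fin r → ℕ := fun j => if (j:ℕ) < d then 0 else r - 1 - (j:ℕ)

variable {d : ℕ}

lemma Pw_mul (a b : Fin r → ℕ) : Pw A a * Pw A b = Pw A (fun j => a j + b j) := by
  rw [Pw, Pw, Pw, ← Finset.prod_mul_distrib]
  exact Finset.prod_congr rfl fun j _ => (pow_add _ _ _).symm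

lemma xiMono_eq_Pw (hdr : d ≤ r) (v : Fin d → ℕ) :
    xiMono A hdr v = Pw A (fun j => if h : (j:ℕ) < d then v ⟨(j:ℕ), h⟩ else 0) := by
  rw [Pw, xiMono]
  have hstep : ∏ j ∈ Finset.univ.filter (fun j : Fin r => (j:ℕ) < d),
      (X j : MvPolynomial (Fin r) A) ^ (if h : (j:ℕ) < d then v ⟨(j:ℕ), h⟩ else 0)
      = ∏ j : Fin r, (X j : MvPolynomial (Fin r) A) ^ (if h : (j:ℕ) < d then v ⟨(j:ℕ), h⟩ else 0) :=
    Finset.prod_subset (Finset.filter_subset _ _) (fun j _ hj => by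
      rw [dif_neg fun h => hj (Finset.mem_filter.2 ⟨Finset.mem_univ _, h⟩), pow_zero])
  rw [← hstep]
  refine Finset.prod_bij (fun (l : Fin d) _ => Fin.castLE hdr l) ?_ ?_ ?_ ?_
  · intro l _
    exact Finset.mem_filter.2 ⟨Finset.mem_univ _, l.2⟩
  · intro l1 _ l2 _ h
    exact Fin.castLE_injective hdr h
  · intro j hj
    exact ⟨⟨(j:ℕ), (Finset.mem_filter.1 hj).2⟩, Finset.mem_univ _, rfl⟩
  · intro l _
    rw [dif_pos (show ((Fin.castLE hdr l : Fin r):ℕ) < d from l.2)]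
    exact congrArg (fun m => X (Fin.castLE hdr l) ^ m) (congrArg v (Fin.ext rfl)).symm

lemma xiMono_mul_tt (hdr : d ≤ r) (v : Fin d → ℕ) :
    xiMono A hdr v * Pw A (tt r d) = Pw A (mu r hdr v) := by
  rw [xiMono_eq_Pw hdr v, Pw_mul]
  congr 1
  funext j
  by_cases h : (j:ℕ) < d
  · rw [mu]
    simp only [dif_pos h, tt, if_pos h, add_zero]
  · rw [mu]
    simp only [dif_neg h, tt, if_neg h, zero_add]

lemma mu_top (hdr : d ≤ r) : mu r hdr (topIdx r d) = fun j : Fin r => r - 1 - (j:ℕ) := by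
  funext j
  rw [mu]
  by_cases h : (j:ℕ) < d
  · rw [dif_pos h]; rfl
  · rw [dif_neg h]

lemma mu_castLE (hdr : d ≤ r) (v : Fin d → ℕ) (l : Fin d) :
    mu r hdr v (Fin.castLE hdr l) = v l := by
  rw [mu, dif_pos (show ((Fin.castLE hdr l : Fin r):ℕ) < d from l.2)]
  exact congrArg v (Fin.ext rfl)

lemma top_mem_basisIdx (hdr : d ≤ r) : topIdx r d ∈ basisIdx r d := by
  rw [basisIdx, Fintype.mem_piFinset]
  intro l
  rw [Finset.mem_range, topIdx]
  have h1 : (l:ℕ) < d := l.2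
  have h2 : d ≤ r := hdr
  omega

lemma mu_not_inj (hdr : d ≤ r) {v : Fin d → ℕ} (hv : v ∈ basisIdx r d) (hne : v ≠ topIdx r d) :
    ¬ Function.Injective (mu r hdr v) := by
  intro hinj
  apply hne
  have hb : ∀ j : Fin r, mu r hdr v j ≤ r - 1 - (j:ℕ) := by
    intro j
    rw [mu]
    by_cases h : (j:ℕ) < d
    · rw [dif_pos h]
      have := (Finset.mem_range.1 ((Fintype.mem_piFinset.1 hv) ⟨(j:ℕ), h⟩))
      have hdr' := hdr
      simp only at this
      omega
    · rw [dif_neg h]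
  have hforced := forced hinj hb
  funext l
  have := hforced (Fin.castLE hdr l)
  rw [mu_castLE] at this
  rw [this, topIdx]
  rfl


end SchurAux

open SchurAux in
/-- **Determinantal push-forward formula.**  For nonnegative integers `p_0,…,p_{d-1}`,
if `ξ_0^{p_0}⋯ξ_{d-1}^{p_{d-1}} = ∑_{0 ≤ i_l ≤ r-l-1} c_{(i)}·ξ^{(i)}` is the basis
decomposition with coefficients in `R₃ = A[c_1,…,c_r]`, then the coefficient of the top
basis monomial `ξ_0^{r-1}⋯ξ_{d-1}^{r-d}` equals `det[s_{p_i + j - r + 1}]_{0 ≤ i,j ≤ d-1}`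
(with `s_m = h_m(ξ)` and `s_m = 0` for `m < 0`). -/
theorem coeff_monomial_eq_schur_det (A : Type*) [CommRing A] [Algebra ℚ A]
    (r d : ℕ) (hdr : d ≤ r) (p : Fin d → ℕ)
    (c : (Fin d → ℕ) → MvPolynomial (Fin r) A)
    (hdec : xiMono A hdr p = ∑ v ∈ basisIdx r d, evalChern A r (c v) * xiMono A hdr v) :
    evalChern A r (c (topIdx r d)) =
      Matrix.det (Matrix.of fun i j : Fin d =>
        segreInt A r ((p i : ℤ) + (j : ℕ) - (r : ℤ) + 1)) := by
  classical
  -- step 1: multiply by the staircase tail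
  have h1 : Pw A (mu r hdr p) = ∑ v ∈ basisIdx r d, evalChern A r (c v) * Pw A (mu r hdr v) := by
    rw [← xiMono_mul_tt hdr p, hdec, Finset.sum_mul]
    refine Finset.sum_congr rfl fun v _ => ?_
    rw [mul_assoc, xiMono_mul_tt hdr v]
  -- step 2: antisymmetrize
  have h2 : aA A r (mu r hdr p) =
      ∑ v ∈ basisIdx r d, evalChern A r (c v) * aA A r (mu r hdr v) := by
    rw [← Alt_Pw, h1, Alt_sum]
    refine Finset.sum_congr rfl fun v _ => ?_
    rw [Alt_evalChern_mul, Alt_Pw]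
  -- step 3: only the top term survives
  have h3 : ∑ v ∈ basisIdx r d, evalChern A r (c v) * aA A r (mu r hdr v)
      = evalChern A r (c (topIdx r d)) * aA A r (mu r hdr (topIdx r d)) := by
    refine Finset.sum_eq_single_of_mem _ (top_mem_basisIdx hdr) fun v hv hne => ?_
    rw [aA_eq_zero (mu_not_inj hdr hv hne), mul_zero]
  -- step 4: determinant of the Jacobi-Trudi matrices
  have hHp : (Hm A r (mu r hdr p)).det
      = Matrix.det (Matrix.of fun i j : Fin d =>
          segreInt A r ((p i : ℤ) + (j : ℕ) - (r : ℤ) + 1)) := by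
    have ha : ∀ i : Fin r, d ≤ (i:ℕ) →
        (fun i : Fin r => ((mu r hdr p i : ℕ) : ℤ) - ((r:ℤ) - 1)) i = -(i:ℤ) := by
      intro i hi
      simp only
      rw [show mu r hdr p i = r - 1 - (i:ℕ) from by rw [mu, dif_neg (by omega)]]
      have : (i:ℕ) < r := i.2
      omega
    have hred := detReduce (A := A) (r := r) d r hdr _ ha
    rw [show (Hm A r (mu r hdr p)) = (Matrix.of fun i k : Fin r => segreInt A r
      ((fun i : Fin r => ((mu r hdr p i : ℕ) : ℤ) - ((r:ℤ) - 1)) i + (k:ℕ))) from rfl, hred]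
    refine congrArg Matrix.det (Matrix.ext fun i k => ?_)
    simp only [Matrix.of_apply]
    rw [mu_castLE hdr]
    congr 1
    ring
  have hHtop : (Hm A r (fun i : Fin r => r - 1 - (i:ℕ))).det = 1 := by
    have ha : ∀ i : Fin r, (0:ℕ) ≤ (i:ℕ) →
        (fun i : Fin r => ((r - 1 - (i:ℕ) : ℕ) : ℤ) - ((r:ℤ) - 1)) i = -(i:ℤ) := by
      intro i _
      simp only
      have : (i:ℕ) < r := i.2
      omega
    have hred := detReduce (A := A) (r := r) 0 r (Nat.zero_le r) _ ha
    rw [show (Hm A r (fun i : Fin r => r - 1 - (i:ℕ))) = (Matrix.of fun i k : Fin r => segreInt A r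
      ((fun i : Fin r => ((r - 1 - (i:ℕ) : ℕ) : ℤ) - ((r:ℤ) - 1)) i + (k:ℕ))) from rfl, hred]
    exact Matrix.det_fin_zero
  -- step 5: cancellation
  have hdelta : aA A r (fun i : Fin r => r - 1 - (i:ℕ)) = (Fm A r).det := by
    rw [aA_eq_det_mul, hHtop, one_mul]
  have hcancel : (Hm A r (mu r hdr p)).det * aA A r (fun i : Fin r => r - 1 - (i:ℕ))
      = evalChern A r (c (topIdx r d)) * aA A r (fun i : Fin r => r - 1 - (i:ℕ)) := by
    calc (Hm A r (mu r hdr p)).det * aA A r (fun i : Fin r => r - 1 - (i:ℕ))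
        = (Hm A r (mu r hdr p)).det * (Fm A r).det := by rw [hdelta]
      _ = aA A r (mu r hdr p) := (aA_eq_det_mul _).symm
      _ = evalChern A r (c (topIdx r d)) * aA A r (mu r hdr (topIdx r d)) := by rw [h2, h3]
      _ = evalChern A r (c (topIdx r d)) *
            ((Hm A r (mu r hdr (topIdx r d))).det * (Fm A r).det) := by
          rw [aA_eq_det_mul (mu r hdr (topIdx r d))]
      _ = evalChern A r (c (topIdx r d)) * (Fm A r).det := by
          rw [mu_top hdr, hHtop, one_mul]
      _ = evalChern A r (c (topIdx r d)) * aA A r (fun i : Fin r => r - 1 - (i:ℕ)) := by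
          rw [hdelta]
  have hfin := isRegular_aA_delta (A := A) (r := r) |>.right hcancel
  rw [← hfin, hHp]


end
end
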